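/- Let p be prime and b ∈ {0,...,p-1}. Then there exists ℓ ∈ {0,...,p-2} such that |b/p − ℓ/(p-1)| ≤ 1/(2(p-1)), and for this ℓ, the quantity P(ℓ) = (1/(p-1)²)·|∑_{j=1}^{p-1} e^{2πi(b/p − ℓ/(p-1))j}|² satisfies P(ℓ) ≥ 4/π². -/

import Mathlib

open Real Complex Finset

lemma aux_abs_exp_sub_one (θ : ℝ) :
    ‖Complex.exp (θ * Complex.I) - 1‖ = 2 * |Real.sin (θ / 2)| := by
  rw [Complex.exp_mul_I]
  have h : (Complex.cos θ + Complex.sin θ * Complex.I - 1)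
      = Complex.ofReal (Real.cos θ - 1) + Complex.ofReal (Real.sin θ) * Complex.I := by
    push_cast; ring
  rw [h, Complex.norm_def, Complex.normSq_add_mul_I, Real.abs_sin_half]
  rw [show (Real.cos θ - 1)^2 + Real.sin θ^2 = 2^2 * ((1 - Real.cos θ)/2) by
    nlinarith [Real.sin_sq_add_cos_sq θ]]
  rw [Real.sqrt_mul (by positivity), Real.sqrt_sq (by norm_num)]

set_option maxHeartbeats 1000000 in
theorem stmt_2_aux (p : ℕ) (hp : p.Prime) (b : ℕ) (hb : b ≤ p - 1) :
    ∃ ℓ : ℕ, ℓ ≤ p - 2 ∧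
      |(b : ℝ) / p - (ℓ : ℝ) / ((p : ℝ) - 1)| ≤ 1 / (2 * ((p : ℝ) - 1)) ∧
      4 / Real.pi ^ 2 ≤
        1 / ((p : ℝ) - 1) ^ 2 * ‖(∑ j ∈ Finset.Icc 1 (p - 1),
          Complex.exp (2 * Real.pi * Complex.I *
            (((b : ℝ) / p - (ℓ : ℝ) / ((p : ℝ) - 1) : ℝ) : ℂ) * (j : ℂ)))‖ ^ 2 := by
  have hp2 : 2 ≤ p := hp.two_le
  set n : ℕ := p - 1 with hn
  have hn1 : 1 ≤ n := by omega
  have hpn : p = n + 1 := by omega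
  have hbn : b ≤ n := hb
  set ℓ : ℕ := (2 * b * n + p - 1) / (2 * p) with hℓ
  have hm : 2 * b * n + p - 1 = 2 * b * n + n := by omega
  -- nat bounds for ℓ
  have hk1 : 2 * p * ℓ ≤ 2 * b * n + n := by
    calc 2 * p * ℓ = ℓ * (2 * p) := by ring
      _ ≤ 2 * b * n + p - 1 := Nat.div_mul_le_self _ _
      _ = 2 * b * n + n := hm
  have hk2 : 2 * b * n + n < 2 * p * ℓ + 2 * p := by
    have := Nat.lt_div_mul_add (a := 2 * b * n + p - 1) (b := 2 * p) (by omega)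
    calc 2 * b * n + n = 2 * b * n + p - 1 := hm.symm
      _ < (2 * b * n + p - 1) / (2 * p) * (2 * p) + 2 * p := this
      _ = 2 * p * ℓ + 2 * p := by rw [← hℓ]; ring
  have hℓle : ℓ ≤ p - 2 := by
    have h1 : 2 * b * n + p - 1 < n * (2 * p) := by
      rw [hm, hpn]
      nlinarith [Nat.mul_le_mul_right n hbn, hn1]
    have h2 : ℓ < n := by
      rw [hℓ, Nat.div_lt_iff_lt_mul (by omega : 0 < 2 * p)]
      exact h1
    omega
  -- real setup
  have hNp : ((n : ℝ)) = (p : ℝ) - 1 := by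
    rw [hpn]; push_cast; ring
  have hN1 : (1 : ℝ) ≤ (n : ℝ) := by exact_mod_cast hn1
  have hN0 : (0 : ℝ) < (n : ℝ) := by linarith
  have hP0 : (0 : ℝ) < (p : ℝ) := by positivity
  have hPN : (p : ℝ) = (n : ℝ) + 1 := by rw [hpn]; push_cast; ring
  set D : ℝ := (b : ℝ) / p - (ℓ : ℝ) / ((p : ℝ) - 1) with hD
  have hDval : D = ((b : ℝ) * n - (ℓ : ℝ) * p) / (p * n) := by
    rw [hD, ← hNp]; field_simp
  -- cast the integer bounds
  have hr1 : 2 * (p : ℝ) * ℓ ≤ 2 * (b : ℝ) * n + n := by exact_mod_cast hk1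
  have hr2 : 2 * (b : ℝ) * n + n + 1 ≤ 2 * (p : ℝ) * ℓ + 2 * p := by exact_mod_cast hk2
  have habs : |(b : ℝ) * n - (ℓ : ℝ) * p| ≤ p / 2 := by
    rw [abs_le, hPN]
    rw [hPN] at hr1 hr2
    constructor <;> nlinarith [hN1]
  have hDabs : |D| ≤ 1 / (2 * (n : ℝ)) := by
    rw [hDval, abs_div, abs_of_pos (by positivity : (0:ℝ) < (p:ℝ) * n)]
    rw [div_le_div_iff₀ (by positivity) (by positivity)]
    nlinarith [habs, hP0, hN0]
  refine ⟨ℓ, hℓle, by rw [← hD, ← hNp]; exact hDabs, ?_⟩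
  -- the analytic part
  rw [← hD, ← hNp]
  have hpi := Real.pi_pos
  set z : ℂ := Complex.exp ((2 * Real.pi * D : ℝ) * Complex.I) with hz
  have hterm : ∀ j ∈ Finset.Icc 1 n,
      Complex.exp (2 * Real.pi * Complex.I * ((D : ℝ) : ℂ) * (j : ℂ)) = z ^ j := by
    intro j _
    rw [hz, ← Complex.exp_nat_mul]
    congr 1
    push_cast
    ring
  rw [Finset.sum_congr rfl hterm]
  clear_value ℓ n z D
  rcases eq_or_ne D 0 with hD0 | hD0
  · -- D = 0 : every term is 1
    have hone : ∑ j ∈ Finset.Icc 1 n, z ^ j = (n : ℂ) := by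
      rw [hz, hD0]
      simp [Complex.exp_zero]
    rw [hone]
    simp only [Complex.norm_natCast]
    rw [show (1:ℝ) / (n:ℝ)^2 * (n:ℝ)^2 = 1 by field_simp]
    rw [div_le_one (by positivity)]
    nlinarith [Real.pi_gt_three]
  · -- D ≠ 0
    have hz1 : z ≠ 1 := by
      intro heq
      rw [hz, Complex.exp_eq_one_iff] at heq
      obtain ⟨k, hk⟩ := heq
      have him := congrArg Complex.im hk
      simp [Complex.mul_im, Complex.ofReal_re, Complex.ofReal_im] at him
      have hDk : D = k := by
        have h2 : D * (2 * Real.pi) = (k : ℝ) * (2 * Real.pi) := by linarith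
        exact mul_right_cancel₀ (by positivity) h2
      have hk1' : |(k : ℝ)| < 1 := by
        rw [← hDk]
        calc |D| ≤ 1 / (2 * (n:ℝ)) := hDabs
          _ < 1 := by rw [div_lt_one (by positivity)]; linarith
      have hk0 : k = 0 := by
        have h3 : |k| < (1 : ℤ) := by exact_mod_cast hk1'
        have h4 := abs_lt.mp h3
        omega
      rw [hk0] at hDk
      simp at hDk
      exact hD0 hDk
    have hsum : ∑ j ∈ Finset.Icc 1 n, z ^ j = (z ^ (n + 1) - z ^ 1) / (z - 1) := by
      rw [← Finset.Ico_add_one_right_eq_Icc]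
      exact geom_sum_Ico hz1 (by omega)
    have hzn : z ^ n = Complex.exp ((2 * Real.pi * D * n : ℝ) * Complex.I) := by
      rw [hz, ← Complex.exp_nat_mul]; congr 1; push_cast; ring
    have habsz : ‖z‖ = 1 := by
      rw [hz, Complex.norm_exp]
      simp
    have hzsub : ‖z - 1‖ = 2 * |Real.sin (Real.pi * D)| := by
      have h := aux_abs_exp_sub_one (2 * Real.pi * D)
      rw [← hz] at h
      rw [h, show 2 * Real.pi * D / 2 = Real.pi * D by ring]
    have hznsub : ‖z ^ n - 1‖ = 2 * |Real.sin (Real.pi * D * n)| := by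
      rw [hzn, aux_abs_exp_sub_one,
        show 2 * Real.pi * D * (n : ℝ) / 2 = Real.pi * D * n by ring]
    have hs0 : 0 < |Real.sin (Real.pi * D)| := by
      rcases (abs_nonneg (Real.sin (Real.pi * D))).lt_or_eq with h | h
      · exact h
      · exfalso
        apply hz1
        have hz0 : ‖z - 1‖ = 0 := by rw [hzsub, ← h]; ring
        have := norm_eq_zero.mp hz0
        exact sub_eq_zero.mp this
    have habsS : ‖∑ j ∈ Finset.Icc 1 n, z ^ j‖
        = ‖z ^ n - 1‖ / ‖z - 1‖ := by
      rw [hsum, norm_div, pow_succ, pow_one]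
      congr 1
      rw [show z ^ n * z - z = z * (z ^ n - 1) by ring, norm_mul, habsz, one_mul]
    rw [habsS, hzsub, hznsub]
    -- bounds on the sines
    have hDa : 0 < |D| := abs_pos.mpr hD0
    have hbound1 : |Real.sin (Real.pi * D)| ≤ Real.pi * |D| := by
      have h1 := Real.sin_sq_lt_sq (x := Real.pi * D) (mul_ne_zero hpi.ne' hD0)
      have h2 : Real.sin (Real.pi * D) ^ 2 < (Real.pi * |D|) ^ 2 := by
        rw [mul_pow, _root_.sq_abs, ← mul_pow]
        exact h1
      exact (abs_lt_of_sq_lt_sq h2 (by positivity)).le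
    have hbound2 : 2 * |D| * n ≤ |Real.sin (Real.pi * D * n)| := by
      have harg : |Real.pi * D * n| ≤ Real.pi / 2 := by
        rw [abs_mul, abs_mul, abs_of_pos hpi, Nat.abs_cast]
        calc Real.pi * |D| * n ≤ Real.pi * (1 / (2 * n)) * n := by
              apply mul_le_mul_of_nonneg_right _ hN0.le
              exact mul_le_mul_of_nonneg_left hDabs hpi.le
          _ = Real.pi / 2 := by field_simp
      have := Real.mul_abs_le_abs_sin harg
      rw [abs_mul, abs_mul, abs_of_pos hpi, Nat.abs_cast] at this
      calc 2 * |D| * n = 2 / Real.pi * (Real.pi * |D| * n) := by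
            rw [div_mul_eq_mul_div, eq_div_iff hpi.ne']; ring
        _ ≤ |Real.sin (Real.pi * D * n)| := this
  -- final computation
    set s := |Real.sin (Real.pi * D)|
    set t := |Real.sin (Real.pi * D * n)|
    have hts : 2 * (n : ℝ) / Real.pi ≤ 2 * t / (2 * s) := by
      rw [show 2 * t / (2 * s) = t / s by rw [mul_div_mul_left t s two_ne_zero]]
      rw [le_div_iff₀ hs0]
      calc 2 * (n : ℝ) / Real.pi * s ≤ 2 * (n : ℝ) / Real.pi * (Real.pi * |D|) := by
            apply mul_le_mul_of_nonneg_left hbound1 (by positivity)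
        _ = 2 * |D| * n := by
            rw [div_mul_eq_mul_div, div_eq_iff hpi.ne']; ring
        _ ≤ t := hbound2
    have hsq : (2 * (n : ℝ) / Real.pi) ^ 2 ≤ (2 * t / (2 * s)) ^ 2 :=
      pow_le_pow_left₀ (by positivity) hts 2
    calc 4 / Real.pi ^ 2 = 1 / (n : ℝ) ^ 2 * (2 * (n : ℝ) / Real.pi) ^ 2 := by
          field_simp
          ring
      _ ≤ 1 / (n : ℝ) ^ 2 * (2 * t / (2 * s)) ^ 2 := by
          apply mul_le_mul_of_nonneg_left hsq (by positivity)

/-- For any prime `p` and `b ∈ {0, …, p-1}`, there is a frequency `ℓ ∈ {0, …, p-2}` with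
`|b/p - ℓ/(p-1)| ≤ 1/(2(p-1))`, and for this `ℓ` the sampling probability
`P(ℓ) = (1/(p-1)²)·|∑_{j=1}^{p-1} e^{2πi(b/p - ℓ/(p-1))j}|²` is at least `4/π² = (2/π)²`. -/
theorem stmt_2 (p : ℕ) (hp : p.Prime) (b : ℕ) (hb : b ≤ p - 1) :
    ∃ ℓ : ℕ, ℓ ≤ p - 2 ∧
      |(b : ℝ) / p - (ℓ : ℝ) / ((p : ℝ) - 1)| ≤ 1 / (2 * ((p : ℝ) - 1)) ∧
      4 / Real.pi ^ 2 ≤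
        1 / ((p : ℝ) - 1) ^ 2 * ‖(∑ j ∈ Finset.Icc 1 (p - 1),
          Complex.exp (2 * Real.pi * Complex.I *
            (((b : ℝ) / p - (ℓ : ℝ) / ((p : ℝ) - 1) : ℝ) : ℂ) * (j : ℂ)))‖ ^ 2 :=
  stmt_2_aux p hp b hb
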